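/- Let d denote the tridiagonal discriminant of a list of integers (determinant of the matrix with the list on the diagonal, −1 on the sub- and super-diagonal; d([]) = 1). Then for every finite list T with all entries ≥ 2, there exists a finite list S with all entries ≥ 2 such that d(T ++ [1] ++ S) = 0, where ++ denotes concatenation. -/

import Mathlib

/-- The tridiagonal matrix with diagonal entries given by the list `T`
and entries `-1` on the sub- and super-diagonal. -/
def tridiagMatrix (T : List ℤ) : Matrix (Fin T.length) (Fin T.length) ℤ :=
  Matrix.of fun i j =>
    if i = j then T.get i
    else if (i : ℕ) + 1 = (j : ℕ) ∨ (j : ℕ) + 1 = (i : ℕ) then -1 else 0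

/-- The discriminant of a chain `T`: the determinant of the associated tridiagonal
matrix (so the discriminant of the empty list is `1`). -/
def chainDisc (T : List ℤ) : ℤ := (tridiagMatrix T).det


lemma disc_cons_cons (a b : ℤ) (L : List ℤ) :
    chainDisc (a :: b :: L) = a * chainDisc (b :: L) - chainDisc L := by
  set n := L.length with hn
  let M : Matrix (Fin (n+2)) (Fin (n+2)) ℤ := tridiagMatrix (a :: b :: L)
  have hMdef : M = tridiagMatrix (a :: b :: L) := rfl
  have hM : chainDisc (a :: b :: L) = M.det := rfl
  rw [hM, Matrix.det_succ_row_zero, Fin.sum_univ_succ, Fin.sum_univ_succ]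
  have h0 : M 0 0 = a := by simp [hMdef, tridiagMatrix]
  have h1 : M 0 (Fin.succ 0) = -1 := by
    simp [hMdef, tridiagMatrix, Fin.ext_iff]
  have hz : ∀ j : Fin n, M 0 (Fin.succ (Fin.succ j)) = 0 := by
    intro j
    simp [hMdef, tridiagMatrix, Fin.ext_iff]
  rw [h0, h1]
  simp only [hz, mul_zero, zero_mul, Finset.sum_const_zero, add_zero]
  -- minor (0,0)
  let B : Matrix (Fin (n+1)) (Fin (n+1)) ℤ := tridiagMatrix (b :: L)
  have hminor0 : M.submatrix Fin.succ (Fin.succAbove 0) = B := by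
    ext i j
    show M i.succ (Fin.succAbove 0 j) = B i j
    have hsa : Fin.succAbove 0 j = Fin.succ j := rfl
    rw [hsa]
    show (if (i.succ : Fin (n+2)) = j.succ then ((a :: b :: L).get i.succ) else _) = _
    show _ = (if i = j then ((b :: L).get i) else if (i:ℕ)+1 = j ∨ (j:ℕ)+1 = i then -1 else 0)
    have hij : ((i.succ : Fin (n+2)) = j.succ) ↔ (i = j) := by simp [Fin.ext_iff]
    by_cases hc : i = j
    · rw [if_pos (hij.mpr hc), if_pos hc]; rfl
    · rw [if_neg (fun h => hc (hij.mp h)), if_neg hc]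
      simp only [Fin.val_succ]
      congr 1
      simp only [eq_iff_iff]
      omega
  -- minor (0,1)
  let N : Matrix (Fin (n+1)) (Fin (n+1)) ℤ := M.submatrix Fin.succ (Fin.succ (0:Fin (n+1))).succAbove
  have hNdet : N.det = - chainDisc L := by
    have hC : chainDisc L = (show Matrix (Fin n) (Fin n) ℤ from tridiagMatrix L).det := rfl
    rw [Matrix.det_succ_column_zero, Fin.sum_univ_succ]
    have hN0 : N 0 0 = -1 := by
      show M (Fin.succ 0) ((Fin.succ (0:Fin (n+1))).succAbove 0) = -1
      have : (Fin.succ (0:Fin (n+1))).succAbove 0 = 0 := rfl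
      rw [this]
      simp [hMdef, tridiagMatrix, Fin.ext_iff]
    have hNz : ∀ i : Fin n, N i.succ 0 = 0 := by
      intro i
      show M i.succ.succ ((Fin.succ (0:Fin (n+1))).succAbove 0) = 0
      have : (Fin.succ (0:Fin (n+1))).succAbove 0 = 0 := rfl
      rw [this]
      simp [hMdef, tridiagMatrix, Fin.ext_iff]
    simp only [hNz, mul_zero, zero_mul, Finset.sum_const_zero, add_zero, hN0]
    have hsub : N.submatrix (Fin.succAbove 0) Fin.succ =
        (show Matrix (Fin n) (Fin n) ℤ from tridiagMatrix L) := by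
      ext i j
      show M (Fin.succAbove 0 i).succ ((Fin.succ (0:Fin (n+1))).succAbove j.succ) = _
      have e1 : (Fin.succAbove 0 i) = i.succ := rfl
      have e2 : ((Fin.succ (0:Fin (n+1))).succAbove j.succ) = j.succ.succ :=
        Fin.succAbove_of_le_castSucc _ _ (by simp [Fin.le_def])
      rw [e1, e2]
      show (if (i.succ.succ : Fin (n+2)) = j.succ.succ then ((a :: b :: L).get i.succ.succ) else _) = _
      show _ = (if i = j then (L.get i) else if (i:ℕ)+1 = j ∨ (j:ℕ)+1 = i then -1 else 0)
      have hij : ((i.succ.succ : Fin (n+2)) = j.succ.succ) ↔ (i = j) := by simp [Fin.ext_iff]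
      by_cases hc : i = j
      · rw [if_pos (hij.mpr hc), if_pos hc]; rfl
      · rw [if_neg (fun h => hc (hij.mp h)), if_neg hc]
        simp only [Fin.val_succ]
        congr 1
        simp only [eq_iff_iff]
        omega
    rw [hsub, hC]
    simp
  rw [hminor0]
  have hB : chainDisc (b :: L) = B.det := rfl
  rw [hB]
  show (-1:ℤ)^(0:ℕ) * a * B.det + (-1:ℤ)^((1:Fin (n+2)):ℕ) * -1 * N.det = a * B.det - chainDisc L
  rw [hNdet, Fin.val_one]
  ring

lemma disc_nil : chainDisc [] = 1 := Matrix.det_fin_zero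

lemma disc_single (a : ℤ) : chainDisc [a] = a := by
  simp [chainDisc, Matrix.det_fin_one, tridiagMatrix]

lemma disc_cons (a : ℤ) (L : List ℤ) (h : L ≠ []) :
    chainDisc (a :: L) = a * chainDisc L - chainDisc L.tail := by
  cases L with
  | nil => exact absurd rfl h
  | cons b L' => simpa using disc_cons_cons a b L'

lemma disc_append : ∀ (A B : List ℤ), A ≠ [] → B ≠ [] →
    chainDisc (A ++ B) = chainDisc A * chainDisc B - chainDisc A.dropLast * chainDisc B.tail
  | [], _, hA, _ => absurd rfl hA
  | [a], B, _, hB => by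
    rw [List.singleton_append, disc_cons a B hB, disc_single]
    simp [disc_nil]
  | [a, b], B, _, hB => by
    have e1 : ([a, b] : List ℤ) ++ B = a :: b :: B := rfl
    rw [e1, disc_cons_cons a b B, disc_cons b B hB]
    have e2 : chainDisc [a, b] = a * b - 1 := by
      rw [show ([a,b]:List ℤ) = a :: b :: [] from rfl, disc_cons_cons, disc_single, disc_nil]
    have e3 : ([a, b] : List ℤ).dropLast = [a] := rfl
    rw [e2, e3, disc_single]
    ring
  | a :: b :: c :: A'', B, _, hB => by
    have ih1 := disc_append (b :: c :: A'') B (by simp) hB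
    have ih2 := disc_append (c :: A'') B (by simp) hB
    have e0 : (a :: b :: c :: A'') ++ B = a :: b :: ((c :: A'') ++ B) := rfl
    rw [e0, disc_cons_cons a b ((c :: A'') ++ B)]
    have e0' : (b :: c :: A'') ++ B = b :: ((c :: A'') ++ B) := rfl
    rw [← e0', ih1, ih2]
    rw [disc_cons_cons a b (c :: A'')]
    have d1 : (a :: b :: c :: A'').dropLast = a :: b :: (c :: A'').dropLast := by simp
    have d2 : (b :: c :: A'').dropLast = b :: (c :: A'').dropLast := by simp
    rw [d1, d2, disc_cons_cons a b ((c :: A'').dropLast)]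
    rw [← d2]
    ring
termination_by A => A.length

lemma build (q p : ℤ) (hq : 0 < q) (hqp : q < p) (hco : IsCoprime p q) :
    ∃ S : List ℤ, S ≠ [] ∧ (∀ a ∈ S, 2 ≤ a) ∧ chainDisc S = p ∧ chainDisc S.tail = q := by
  by_cases h1 : q = 1
  · refine ⟨[p], by simp, ?_, disc_single p, by simp [disc_nil, h1]⟩
    intro a ha
    simp at ha
    omega
  · have hq2 : 2 ≤ q := by omega
    have hkey : p % q + q * (p / q) = p := Int.emod_add_mul_ediv p q
    have he0 : 0 ≤ p % q := Int.emod_nonneg p (by omega)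
    have he1 : p % q < q := Int.emod_lt_of_pos p hq
    have hne : p % q ≠ 0 := by
      intro h0
      have hdvd : q ∣ p := ⟨p / q, by omega⟩
      obtain ⟨u, v, huv⟩ := hco
      have : q ∣ (1 : ℤ) := by
        rw [← huv]
        exact Dvd.dvd.add (Dvd.dvd.mul_left hdvd u) (Dvd.dvd.mul_left dvd_rfl v)
      have := Int.le_of_dvd one_pos this
      omega
    set r := q - p % q with hrdef
    have hr0 : 0 < r := by omega
    have hrq : r < q := by omega
    have hcoqr : IsCoprime q r := by
      have h2 : IsCoprime q (-p + q * (1 + p / q)) :=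
        (hco.symm.neg_right).add_mul_left_right _
      have : r = -p + q * (1 + p / q) := by rw [hrdef]; ring_nf; omega
      rwa [this]
    obtain ⟨S', hS'ne, hS'2, hS'd, hS't⟩ := build r q hr0 hrq hcoqr
    refine ⟨(p / q + 1) :: S', by simp, ?_, ?_, ?_⟩
    · intro a ha
      rcases List.mem_cons.mp ha with h | h
      · subst h
        nlinarith [hkey]
      · exact hS'2 a h
    · rw [disc_cons _ _ hS'ne, hS'd, hS't]
      ring_nf
      nlinarith [hkey]
    · simpa using hS'd
termination_by q.toNat
decreasing_by simp [hrdef]; omega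

lemma disc_facts (T : List ℤ) (hT : T ≠ []) (h : ∀ a ∈ T, 2 ≤ a) :
    0 < chainDisc T.dropLast ∧ chainDisc T.dropLast < chainDisc T ∧
      IsCoprime (chainDisc T) (chainDisc T.dropLast) := by
  induction T using List.reverseRecOn with
  | nil => exact absurd rfl hT
  | append_singleton T x ih =>
    have hx : 2 ≤ x := h x (by simp)
    rcases eq_or_ne T [] with rfl | hTne
    · simp only [List.nil_append, List.dropLast_singleton, disc_nil, disc_single]
      exact ⟨one_pos, by omega, isCoprime_one_right⟩
    · obtain ⟨h1, h2, h3⟩ := ih hTne (fun a ha => h a (by simp [ha]))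
      have happ := disc_append T [x] hTne (by simp)
      rw [disc_single, List.tail_cons, disc_nil, mul_one] at happ
      have hdl : (T ++ [x]).dropLast = T := by simp
      rw [hdl, happ]
      refine ⟨by omega, by nlinarith, ?_⟩
      have : chainDisc T * x - chainDisc T.dropLast
          = -chainDisc T.dropLast + chainDisc T * x := by ring
      rw [this]
      exact (h3.symm.neg_left).add_mul_left_left _

/-- **Existence of the adjoint chain.**
For every (nonempty) finite list `T` of integers `≥ 2` there exists a finite list `S`
of integers `≥ 2` such that the chain `T ++ [1] ++ S` has discriminant `0`, i.e. the
chain of type `[T, 1, T*]` has degenerate intersection matrix (it blows down to a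
`0`-curve). -/
theorem adjoint_chain_exists (T : List ℤ) (hT : T ≠ []) (h : ∀ a ∈ T, 2 ≤ a) :
    ∃ S : List ℤ, (∀ a ∈ S, 2 ≤ a) ∧ chainDisc (T ++ [1] ++ S) = 0 := by
  obtain ⟨h1, h2, h3⟩ := disc_facts T hT h
  set n := chainDisc T with hn
  set m := chainDisc T.dropLast with hm
  have hco : IsCoprime n (n - m) := by
    have : n - m = -m + n * 1 := by ring
    rw [this]
    exact (h3.neg_right).add_mul_left_right _
  obtain ⟨S, hSne, hS2, hSd, hSt⟩ := build (n - m) n (by omega) (by omega) hco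
  refine ⟨S, hS2, ?_⟩
  have e1 : T ++ [1] ++ S = T ++ (1 :: S) := by simp
  rw [e1, disc_append T (1 :: S) hT (by simp)]
  rw [disc_cons 1 S hSne, List.tail_cons, hSd, hSt]
  ring
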